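/- Let (R, m, k) be a local (G_1) and (S_2) F-finite and F-pure ring of prime characteristic p > 0. If D is a torsion divisor of index p^e, Cartier in codimension 1, then the divisorial ideal R(D) is a direct summand of F^e_* R as an R-module. -/

import Mathlib

open CategoryTheory TensorProduct Polynomial

attribute [local instance] Algebra.TensorProduct.rightAlgebra

universe u

noncomputable section

/-! ### Purity, F-purity, F-finiteness, Frobenius pushforwards -/

/-- A ring homomorphism `f : R →+* S` is *pure* if for every `R`-module `Q`, the base
change map `R ⊗[R] Q → S ⊗[R] Q` (where `S` is an `R`-module via `f`) is injective. -/
def RingHom.IsPureHom {R S : Type u} [CommRing R] [CommRing S] (f : R →+* S) : Prop :=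
  letI : Algebra R S := f.toAlgebra
  ∀ (Q : Type u) [AddCommGroup Q] [Module R Q],
    Function.Injective (LinearMap.rTensor Q (Algebra.linearMap R S))

/-- An `R`-linear map `φ : M → N` is *pure* if `φ ⊗ id_Q` is injective for every
`R`-module `Q`. -/
def LinearMap.IsPureLMap {R : Type u} [CommRing R] {M N : Type u}
    [AddCommGroup M] [Module R M] [AddCommGroup N] [Module R N] (φ : M →ₗ[R] N) : Prop :=
  ∀ (Q : Type u) [AddCommGroup Q] [Module R Q],
    Function.Injective (LinearMap.rTensor Q φ)

/-- `R` of prime characteristic `p > 0` is `F`-pure if the Frobenius endomorphism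
`r ↦ r ^ p` is a pure ring homomorphism. -/
def IsFPure (R : Type u) [CommRing R] (p : ℕ) [ExpChar R p] : Prop :=
  (frobenius R p).IsPureHom

/-- A ring is `F`-pure if it has prime characteristic `p > 0` and the Frobenius
endomorphism is a pure ring homomorphism. -/
def IsFPureRing (A : Type u) [CommRing A] : Prop :=
  ∃ (p : ℕ) (hp : Fact p.Prime) (hc : CharP A p),
    letI := hp; letI := hc; (frobenius A p).IsPureHom

/-- `R` is `F`-finite if the pushforward of `R` along each iterate of the Frobenius
endomorphism is a finitely generated `R`-module. -/
def IsFFinite (R : Type u) [CommRing R] (p : ℕ) [ExpChar R p] : Prop :=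
  ∀ e : ℕ, (iterateFrobenius R p e).Finite

/-- Type synonym for the Frobenius pushforward `F^e_* M` of a module `M`. -/
def FPush (_p _e : ℕ) (M : Type u) : Type u := M

instance (p e : ℕ) (M : Type u) [AddCommGroup M] : AddCommGroup (FPush p e M) :=
  inferInstanceAs (AddCommGroup M)

/-- The `R`-module structure on `F^e_* M`, given by `r • m = r ^ (p ^ e) • m`. -/
instance (R : Type u) [CommRing R] (p : ℕ) [ExpChar R p] (e : ℕ) (M : Type u)
    [AddCommGroup M] [Module R M] : Module R (FPush p e M) :=
  Module.compHom M (iterateFrobenius R p e)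

/-- The identity map of `M`, viewed as a map `M → F^e_* M`. -/
def toFPush (p e : ℕ) {M : Type u} (m : M) : FPush p e M := m

/-- The `R`-linear map `R → F^e_* R` sending `1` to `F^e_* c`. -/
def splittingMap (R : Type u) [CommRing R] (p : ℕ) [ExpChar R p] (e : ℕ) (c : R) :
    R →ₗ[R] FPush p e R where
  toFun r := toFPush p e (c * iterateFrobenius R p e r)
  map_add' x y := by
    show c * iterateFrobenius R p e (x + y) =
      c * iterateFrobenius R p e x + c * iterateFrobenius R p e y
    rw [map_add, mul_add]
  map_smul' r x := by
    show c * iterateFrobenius R p e (r * x) =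
      iterateFrobenius R p e r * (c * iterateFrobenius R p e x)
    rw [map_mul]; ring

/-- The `e`-th Frobenius splitting ideal `I_e(R)`, as a set: those `c ∈ R` such that
the `R`-linear map `R → F^e_* R`, `1 ↦ F^e_* c`, is not pure. -/
def frobeniusSplittingSet (R : Type u) [CommRing R] (p : ℕ) [ExpChar R p] (e : ℕ) :
    Set R :=
  {c : R | ¬ (splittingMap R p e c).IsPureLMap}

/-- `M` is a direct summand of `N` as `R`-modules. -/
def IsDirectSummandOf (R : Type u) [CommRing R] (M N : Type u)
    [AddCommGroup M] [Module R M] [AddCommGroup N] [Module R N] : Prop :=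
  ∃ (ι : M →ₗ[R] N) (π : N →ₗ[R] M), π.comp ι = LinearMap.id

/-! ### Dimension theory, depth, Serre conditions, Gorenstein and Cohen–Macaulay rings -/

/-- The height of an ideal `I`: the infimum over primes `P ⊇ I` of the supremum of the
lengths of chains of primes below `P`. -/
def idealHeight (A : Type u) [CommRing A] (I : Ideal A) : WithBot ℕ∞ :=
  ⨅ (P : PrimeSpectrum A) (_ : I ≤ P.asIdeal),
    Order.krullDim {Q : PrimeSpectrum A // Q.asIdeal ≤ P.asIdeal}

/-- `Ext^i_A(M, N)`, as an `A`-module. -/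
def extMod (A : Type u) [CommRing A] (i : ℕ) (M N : ModuleCat.{u} A) : ModuleCat.{u} A :=
  ((Ext A (ModuleCat.{u} A) i).obj (Opposite.op M)).obj N

/-- A Gorenstein local ring: a Noetherian local ring of finite injective dimension over
itself, i.e. there is `n` such that `Ext^i_A(M, A) = 0` for all `i > n` and all `M`. -/
def IsGorensteinLocalRing (A : Type u) [CommRing A] : Prop :=
  IsNoetherianRing A ∧ IsLocalRing A ∧
    ∃ n : ℕ, ∀ i > n, ∀ M : ModuleCat.{u} A,
      Subsingleton (extMod A i M (ModuleCat.of A A))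

/-- Over a local ring `A`, `depth_A(M) ≥ n` iff `Ext^i_A(k, M) = 0` for all `i < n`,
where `k` is the residue field of `A`. -/
def depthGE (A : Type u) [CommRing A] [IsLocalRing A] (M : ModuleCat.{u} A) (n : ℕ) :
    Prop :=
  ∀ i < n, Subsingleton (extMod A i (ModuleCat.of A (IsLocalRing.ResidueField A)) M)

/-- Serre's condition `(S_2)` for a module `M`: for every prime `P`,
`depth_{A_P}(M_P) ≥ min {2, dim M_P}`. -/
def IsS2Module (A : Type u) [CommRing A] (M : Type u) [AddCommGroup M] [Module A M] :
    Prop :=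
  ∀ (P : Ideal A) [P.IsPrime], ∀ n : ℕ, n ≤ 2 →
    (n : WithBot ℕ∞) ≤ Order.krullDim
      {Q : PrimeSpectrum A //
        (⊤ : Submodule A M).annihilator ≤ Q.asIdeal ∧ Q.asIdeal ≤ P} →
    depthGE (Localization.AtPrime P)
      (ModuleCat.of (Localization.AtPrime P) (LocalizedModule P.primeCompl M)) n

/-- Serre's condition `(S_2)` for a ring. -/
def IsS2Ring (A : Type u) [CommRing A] : Prop := IsS2Module A A

/-- A ring is `(G_1)` if it is Gorenstein in codimension one, i.e. `A_P` is Gorenstein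
for every prime `P` of height at most one. -/
def IsG1 (A : Type u) [CommRing A] : Prop :=
  ∀ (P : Ideal A) [P.IsPrime], idealHeight A P ≤ 1 →
    IsGorensteinLocalRing (Localization.AtPrime P)

/-- A module over a local ring is Cohen–Macaulay if its depth is at least the Krull
dimension of its support. -/
def IsCMModule (A : Type u) [CommRing A] [IsLocalRing A] (M : Type u)
    [AddCommGroup M] [Module A M] : Prop :=
  ∀ n : ℕ, (n : WithBot ℕ∞) ≤ Order.krullDim
      {Q : PrimeSpectrum A // (⊤ : Submodule A M).annihilator ≤ Q.asIdeal} →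
    depthGE A (ModuleCat.of A M) n

/-- A Cohen–Macaulay local ring. -/
def IsCMLocalRing (A : Type u) [CommRing A] : Prop :=
  IsNoetherianRing A ∧ ∃ _ : IsLocalRing A, IsCMModule A A

/-- A regular local ring: a Noetherian local ring whose maximal ideal is generated by
`dim A` elements. -/
def IsRegularLocalRingDef (A : Type u) [CommRing A] : Prop :=
  IsNoetherianRing A ∧ ∃ _ : IsLocalRing A, ∃ s : Finset A,
    Ideal.span (s : Set A) = IsLocalRing.maximalIdeal A ∧
    (s.card : WithBot ℕ∞) = ringKrullDim A

/-- A catenary ring: any two saturated chains of primes with the same endpoints have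
the same length. -/
def IsCatenary (A : Type u) [CommRing A] : Prop :=
  ∀ c₁ c₂ : LTSeries (PrimeSpectrum A),
    c₁.head = c₂.head → c₁.last = c₂.last →
    (∀ i : Fin c₁.length, c₁.toFun i.castSucc ⋖ c₁.toFun i.succ) →
    (∀ i : Fin c₂.length, c₂.toFun i.castSucc ⋖ c₂.toFun i.succ) →
    c₁.length = c₂.length

/-- An equidimensional ring: all minimal primes have quotients of full dimension. -/
def IsEquidimensional (A : Type u) [CommRing A] : Prop :=
  ∀ P ∈ minimalPrimes A, ringKrullDim (A ⧸ P) = ringKrullDim A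

/-- A parameter element of a local ring: a nonunit cutting the dimension down by
exactly one. -/
def IsParamElem (A : Type u) [CommRing A] (x : A) : Prop :=
  ¬ IsUnit x ∧ ringKrullDim (A ⧸ Ideal.span {x}) + 1 = ringKrullDim A

/-- A system of parameters of a local ring, as a list: nonunits, as many as the Krull
dimension, generating an ideal with zero-dimensional quotient. -/
def IsSOP (A : Type u) [CommRing A] (xs : List A) : Prop :=
  (xs.length : WithBot ℕ∞) = ringKrullDim A ∧ (∀ x ∈ xs, ¬ IsUnit x) ∧
    ringKrullDim (A ⧸ Ideal.span {y | y ∈ xs}) ≤ 0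

/-! ### Symbolic powers, unmixed parts, bracket powers -/

/-- The complement of the union of the minimal primes of `I`, as a submonoid. -/
def Ideal.minCompl {A : Type u} [CommRing A] (I : Ideal A) : Submonoid A where
  carrier := {s : A | ∀ P ∈ I.minimalPrimes, s ∉ P}
  one_mem' := by
    intro P hP
    have hprime : P.IsPrime := hP.1.1
    exact (Ideal.ne_top_iff_one P).mp hprime.ne_top
  mul_mem' := by
    intro a b ha hb P hP hab
    have hprime : P.IsPrime := hP.1.1
    rcases hprime.mem_or_mem hab with h | h
    · exact ha P hP h
    · exact hb P hP h

/-- The `N`-th symbolic power of an ideal `I`: the contraction of `I ^ N` from the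
localization at the complement of the union of the minimal primes of `I`. -/
def Ideal.symPow {A : Type u} [CommRing A] (I : Ideal A) (N : ℕ) : Ideal A :=
  ((I ^ N).map (algebraMap A (Localization I.minCompl))).comap
    (algebraMap A (Localization I.minCompl))

/-- The intersection of the minimal primary components of an ideal `a`: the contraction
of `a` from the localization at the complement of the union of its minimal primes. -/
def Ideal.unmixedPart {A : Type u} [CommRing A] (a : Ideal A) : Ideal A :=
  (a.map (algebraMap A (Localization a.minCompl))).comap
    (algebraMap A (Localization a.minCompl))

/-- In characteristic `p > 0`, the bracket power `I^{[q]}`: the ideal generated by the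
`q`-th powers of the elements of `I`. -/
def Ideal.bracketPow {A : Type u} [CommRing A] (I : Ideal A) (q : ℕ) : Ideal A :=
  Ideal.span ((fun r => r ^ q) '' (I : Set A))

/-! ### Canonical modules and canonical ideals -/

/-- A surjection onto `A` from a regular local ring. -/
structure RegularSurjection (A : Type u) [CommRing A] : Type (u + 1) where
  carrier : Type u
  [instRing : CommRing carrier]
  toHom : carrier →+* A
  regular : IsRegularLocalRingDef carrier
  surjective : Function.Surjective toHom

attribute [instance] RegularSurjection.instRing

/-- `M` is a canonical module of `A`: writing `A ≅ S/I` with `S` regular local via a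
surjection `π : S → A`, we have `M ≅ Ext^h_S(A, S)` where `h = ht (ker π)`. -/
def IsCanonicalModule (A : Type u) [CommRing A] (M : Type u) [AddCommGroup M]
    [Module A M] : Prop :=
  ∃ (P : RegularSurjection A) (h : ℕ),
    ((h : ℕ∞) : WithBot ℕ∞) = idealHeight P.carrier (RingHom.ker P.toHom) ∧
    letI : Module P.carrier A := Module.compHom A P.toHom
    letI : Module P.carrier M := Module.compHom M P.toHom
    Nonempty
      ((extMod P.carrier h (ModuleCat.of P.carrier A) (ModuleCat.of P.carrier P.carrier))
        ≃ₗ[P.carrier] M)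

/-- A canonical ideal of `A`: a proper ideal which is a canonical module of `A`. -/
def IsCanonicalIdeal (A : Type u) [CommRing A] (J : Ideal A) : Prop :=
  J ≠ ⊤ ∧ IsCanonicalModule A J

/-- An ideal is Cartier if, Zariski-locally, it is generated by one non-zero-divisor. -/
def IsCartierIdeal (A : Type u) [CommRing A] (I : Ideal A) : Prop :=
  ∀ (P : Ideal A), P.IsPrime →
    ∃ a ∈ I, a ∈ nonZeroDivisors A ∧ ∀ x ∈ I, ∃ r : A, ∃ s ∉ P, s * x = r * a

/-- A module is principal in codimension one: locally cyclic at every prime of height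
at most one. -/
def IsPrincipalInCodimOne (A : Type u) [CommRing A] (M : Type u) [AddCommGroup M]
    [Module A M] : Prop :=
  ∀ (P : Ideal A), P.IsPrime → idealHeight A P ≤ 1 →
    ∃ g : M, ∀ x : M, ∃ r : A, ∃ s ∉ P, s • x = r • g

/-! ### Generalized divisors à la Hartshorne, divisorial ideals and cyclic covers -/

/-- For a submodule `M` of the total quotient ring `L` of `A`, its "dual"
`(A :_L M) = {x ∈ L ∣ x · M ⊆ A}`.  If `M = A(D)` then `(A :_L M) = A(-D)`. -/
def divDual (A : Type u) [CommRing A] (L : Type u) [CommRing L] [Algebra A L]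
    (M : Submodule A L) : Submodule A L where
  carrier := {x : L | ∀ m ∈ M, x * m ∈ (1 : Submodule A L)}
  add_mem' := by
    intro a b ha hb m hm
    rw [add_mul]; exact Submodule.add_mem _ (ha m hm) (hb m hm)
  zero_mem' := by intro m hm; rw [zero_mul]; exact Submodule.zero_mem _
  smul_mem' := by
    intro r x hx m hm
    rw [smul_mul_assoc]; exact Submodule.smul_mem _ r (hx m hm)

/-- The reflexive hull `M^{**} = (A : (A : M))` of a submodule of the total quotient
ring `L` of `A`. -/
def divHull (A : Type u) [CommRing A] (L : Type u) [CommRing L] [Algebra A L]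
    (M : Submodule A L) : Submodule A L := divDual A L (divDual A L M)

/-- For `M = A(D)` the divisorial ideal of a generalized divisor `D` (Cartier in
codimension one), `divPowZ A L M i = A(iD)`: the reflexive hull of `M ^ i` for `i ≥ 0`
and of `(A : M) ^ (-i)` for `i < 0`. -/
def divPowZ (A : Type u) [CommRing A] (L : Type u) [CommRing L] [Algebra A L]
    (M : Submodule A L) : ℤ → Submodule A L
  | Int.ofNat n => divHull A L (M ^ n)
  | Int.negSucc n => divHull A L ((divDual A L M) ^ (n + 1))

/-- A submodule of the total quotient ring is principal generated by a unit; for a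
divisorial ideal `A(D)` this says precisely that `D ∼ 0`. -/
def IsPrincipalUnitSub (A : Type u) [CommRing A] (L : Type u) [CommRing L] [Algebra A L]
    (M : Submodule A L) : Prop :=
  ∃ v : L, IsUnit v ∧ M = Submodule.span A {v}

/-- A divisorial ideal, representing a generalized divisor (Cartier in codimension one)
in the sense of Hartshorne: a reflexive `A`-submodule of the total quotient ring `L`
containing a unit of `L`, which can be cleared into `A` by a non-zero-divisor and which
is principal, generated by a unit, in codimension one. -/
structure IsGenDivisorIdeal (A : Type u) [CommRing A] (L : Type u) [CommRing L]
    [Algebra A L] (M : Submodule A L) : Prop where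
  fractional : ∃ r : A, r ∈ nonZeroDivisors A ∧
    ∀ m ∈ M, algebraMap A L r * m ∈ (1 : Submodule A L)
  exists_unit : ∃ v : L, IsUnit v ∧ v ∈ M
  reflexive : divHull A L M = M
  locallyPrincipal : ∀ (P : Ideal A), P.IsPrime → idealHeight A P ≤ 1 →
    ∃ v : L, IsUnit v ∧ v ∈ M ∧ ∀ m ∈ M, ∃ r : A, ∃ s ∉ P, s • m = r • v

/-- The index of a torsion divisor represented by its divisorial ideal `M`: the least
`k ≥ 1` such that `kD` is principal, generated by a unit of `L`. -/
def divisorIndex (A : Type u) [CommRing A] (L : Type u) [CommRing L] [Algebra A L]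
    (M : Submodule A L) : ℕ :=
  sInf {k : ℕ | 1 ≤ k ∧ IsPrincipalUnitSub A L (divPowZ A L M (k : ℤ))}

/-- `M ⊆ L` represents a choice of canonical divisor `K_X` on `X = Spec A`: a
generalized divisor, Cartier in codimension one, whose divisorial ideal is a canonical
module of `A`. -/
def IsCanonicalDivisorIdeal (A : Type u) [CommRing A] (L : Type u) [CommRing L]
    [Algebra A L] (M : Submodule A L) : Prop :=
  IsGenDivisorIdeal A L M ∧ IsCanonicalModule A M

/-- The cyclic cover `A_D = ⊕_{i=0}^{N-1} A(-iD) t^{-i}` of `A` corresponding to a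
torsion divisor `D` of index `N` with `A(ND) = A·u`, realized as the `A`-subalgebra of
`L[T]/(T^N - u⁻¹)` generated by the pieces `A(-iD)·Tⁱ` for `0 ≤ i < N` (the root `T`
plays the role of `t^{-1}`; it satisfies `T^N = u⁻¹`, which is the defining relation
`u^{-1} t^{-N} = 1`). -/
def cyclicCoverAlg (A : Type u) [CommRing A] (L : Type u) [CommRing L] [Algebra A L]
    (M : Submodule A L) (N : ℕ) (u : Lˣ) :
    Subalgebra A (AdjoinRoot ((X : L[X]) ^ N - C ((u⁻¹ : Lˣ) : L))) :=
  Algebra.adjoin A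
    (⋃ i ∈ Finset.range N,
      (fun x : L => AdjoinRoot.of _ x * AdjoinRoot.root _ ^ i) ''
        ((divPowZ A L M (-(i : ℤ)) : Set L)))

/-! ### Q-Gorenstein rings -/

/-- `A` is `ℚ`-Gorenstein with index `m`: `A` is `(G_1)` and `(S_2)`, admits a choice of
canonical divisor, here given by a canonical ideal `J` (so `J = A(K_X)` for a canonical
divisor `K_X`), and `m` is the least positive integer such that `m K_X` is Cartier,
i.e. such that the `m`-th symbolic power `J^{(m)}` is a Cartier divisorial ideal. -/
def IsQGorensteinOfIndex (A : Type u) [CommRing A] (m : ℕ) : Prop :=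
  IsG1 A ∧ IsS2Ring A ∧ ∃ J : Ideal A, IsCanonicalIdeal A J ∧ 1 ≤ m ∧
    IsCartierIdeal A (J.symPow m) ∧
    m = sInf {k : ℕ | 1 ≤ k ∧ IsCartierIdeal A (J.symPow k)}

/-- `A` is `ℚ`-Gorenstein: `(G_1)`, `(S_2)`, and some positive multiple of a canonical
divisor is Cartier. -/
def IsQGorenstein (A : Type u) [CommRing A] : Prop :=
  ∃ m : ℕ, IsQGorensteinOfIndex A m

/-! ### Excellent local rings -/

/-- A Noetherian algebra over a field `k` is geometrically regular if, after base change
to any finite field extension of `k`, all localizations at primes are regular local. -/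
def IsGeometricallyRegular (k : Type u) [Field k] (B : Type u) [CommRing B]
    [Algebra k B] : Prop :=
  ∀ (k' : Type u) [Field k'] [Algebra k k'], Module.Finite k k' →
    ∀ (P : Ideal (B ⊗[k] k')) [P.IsPrime], IsRegularLocalRingDef (Localization.AtPrime P)

/-- An excellent local ring: a Noetherian local ring which is universally catenary and
whose formal fibers (the fibers of `A → Â` over the primes of `A`, where `Â` is the
completion at the maximal ideal) are geometrically regular. -/
def IsExcellentLocalRing (A : Type u) [CommRing A] : Prop :=
  IsNoetherianRing A ∧ (∀ n : ℕ, IsCatenary (MvPolynomial (Fin n) A)) ∧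
  ∃ hloc : IsLocalRing A,
    ∀ (p : Ideal A) [p.IsPrime],
      letI := hloc
      IsGeometricallyRegular (FractionRing (A ⧸ p))
        ((AdicCompletion (IsLocalRing.maximalIdeal A) A) ⊗[A] (FractionRing (A ⧸ p)))

end

/-! ### Auxiliary lemmas for the proof -/

noncomputable section Aux

open TensorProduct

def msmul {R M : Type u} [Semiring R] [AddCommMonoid M] (i : Module R M) (r : R) (m : M) :
    M := letI := i; r • m

def mkLEquiv {R N₁ N₂ : Type u} [CommRing R] [AddCommGroup N₁] [AddCommGroup N₂]
    (i₁ : Module R N₁) (i₂ : Module R N₂) (f : N₁ → N₂) (finv : N₂ → N₁)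
    (hadd : ∀ a b, f (a + b) = f a + f b)
    (hsmul : ∀ (r : R) (a : N₁), f (msmul i₁ r a) = msmul i₂ r (f a))
    (hl : ∀ a, finv (f a) = a) (hr : ∀ b, f (finv b) = b) :
    @LinearEquiv R R _ _ (RingHom.id R) (RingHom.id R) _ _ N₁ N₂ _ _ i₁ i₂ := by
  letI := i₁; letI := i₂
  exact { toFun := f, map_add' := hadd, map_smul' := hsmul, invFun := finv,
          left_inv := hl, right_inv := hr }

theorem inj_transfer {R : Type u} [CommRing R] {N₁ N₂ Q : Type u}
    [AddCommGroup N₁] [AddCommGroup N₂] [AddCommGroup Q]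
    [i₁ : Module R N₁] [Module R N₂] [Module R Q]
    {f₁ : R →ₗ[R] N₁} (h : Function.Injective (LinearMap.rTensor Q f₁))
    (f₂ : R →ₗ[R] N₂) (g : N₁ ≃ₗ[R] N₂) (hcomp : ∀ x : R, g (f₁ x) = f₂ x) :
    Function.Injective (LinearMap.rTensor Q f₂) := by
  have hEq : (LinearMap.rTensor Q f₂)
      = (TensorProduct.congr g (LinearEquiv.refl R Q)).toLinearMap ∘ₗ
        LinearMap.rTensor Q f₁ := by
    apply TensorProduct.ext'
    intro x q
    simp [TensorProduct.congr_tmul, hcomp]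
  rw [hEq]
  rw [LinearMap.coe_comp]
  exact Function.Injective.comp (TensorProduct.congr g (LinearEquiv.refl R Q)).injective h

theorem finite_transfer {R N₁ N₂ : Type u} [CommRing R] [AddCommGroup N₁]
    [AddCommGroup N₂] (i₁ : Module R N₁) [i₂ : Module R N₂]
    (h : @Module.Finite R N₁ _ _ i₁)
    (g : @LinearEquiv R R _ _ (RingHom.id R) (RingHom.id R) _ _ N₁ N₂ _ _ i₁ i₂) :
    Module.Finite R N₂ := by
  letI := i₁
  exact Module.Finite.equiv g

theorem pure_splittingMap_one (R : Type u) [CommRing R] (p : ℕ) [Fact p.Prime] [CharP R p]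
    (hFP : IsFPure R p) (Q : Type u) [AddCommGroup Q] [Module R Q] :
    Function.Injective (LinearMap.rTensor Q (splittingMap R p 1 1)) := by
  have h := hFP Q
  refine inj_transfer (i₁ := @Algebra.toModule R R _ _ (frobenius R p).toAlgebra)
    h (splittingMap R p 1 1) ?_ ?_
  · refine mkLEquiv _ _ (fun x => x) (fun x => x) (fun _ _ => rfl) ?_
      (fun _ => rfl) (fun _ => rfl)
    intro r x
    show frobenius R p r * x = iterateFrobenius R p 1 r * x
    rw [iterateFrobenius_one]
  · intro x
    show frobenius R p x = 1 * iterateFrobenius R p 1 x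
    rw [one_mul, iterateFrobenius_one]

theorem finite_fpush_one (R : Type u) [CommRing R] (p : ℕ) [Fact p.Prime] [CharP R p]
    (hFF : IsFFinite R p) : Module.Finite R (FPush p 1 R) := by
  refine finite_transfer (@Algebra.toModule R R _ _ (iterateFrobenius R p 1).toAlgebra) (hFF 1) ?_
  exact mkLEquiv _ _ (fun x => x) (fun x => x) (fun _ _ => rfl) (fun _ _ => rfl)
    (fun _ => rfl) (fun _ => rfl)

theorem split_of_pure {R : Type u} [CommRing R] [IsNoetherianRing R]
    {N : Type u} [AddCommGroup N] [Module R N] [Module.Finite R N] (f : R →ₗ[R] N)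
    (hf : ∀ (Q : Type u) [AddCommGroup Q] [Module R Q],
      Function.Injective (LinearMap.rTensor Q f)) :
    ∃ φ : N →ₗ[R] R, φ.comp f = LinearMap.id := by
  classical
  -- f is injective
  have hinj : Function.Injective f := by
    intro x y hxy
    have h := hf R
    have h1 : LinearMap.rTensor R f (x ⊗ₜ 1) = LinearMap.rTensor R f (y ⊗ₜ 1) := by
      simp only [LinearMap.rTensor_tmul, hxy]
    have h2 := h h1
    have h3 := congrArg (TensorProduct.rid R R) h2
    simpa using h3
  set C := N ⧸ LinearMap.range f with hC
  obtain ⟨k, πC, hπC⟩ := Module.Finite.exists_fin' R C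
  have hpi : ∀ {M₂ : Type u} [AddCommGroup M₂] [Module R M₂]
      (g : (Fin k → R) →ₗ[R] M₂) (t : Fin k → R),
      g t = ∑ j, t j • g (Pi.single j 1) := by
    intro M₂ _ _ g t
    rw [LinearMap.pi_apply_eq_sum_univ]
    refine Finset.sum_congr rfl fun j _ => ?_
    congr 1
    congr 1
    funext j'
    simp [Pi.single_apply, eq_comm]
  have hKfg : (LinearMap.ker πC).FG := (isNoetherian_def.mp inferInstance _)
  obtain ⟨s, b, hb⟩ := Submodule.fg_iff_exists_fin_generating_family.mp hKfg
  have hmkQ : Function.Surjective (LinearMap.range f).mkQ :=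
    Submodule.mkQ_surjective _
  choose n hn using fun j : Fin k => hmkQ (πC (Pi.single j 1))
  have hbK : ∀ i : Fin s, πC (b i) = 0 := by
    intro i
    have : b i ∈ LinearMap.ker πC := by
      rw [← hb]; exact Submodule.subset_span ⟨i, rfl⟩
    exact this
  have hrel0 : ∀ i : Fin s, (∑ j, b i j • n j) ∈ LinearMap.range f := by
    intro i
    rw [← Submodule.ker_mkQ (LinearMap.range f)]
    show (LinearMap.range f).mkQ (∑ j, b i j • n j) = 0
    have h4 : (LinearMap.range f).mkQ (∑ j, b i j • n j)
        = ∑ j, b i j • πC (Pi.single j 1) := by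
      rw [map_sum]
      refine Finset.sum_congr rfl fun j _ => ?_
      rw [map_smul, hn]
    rw [h4, ← hpi πC (b i), hbK]
  choose r hr using hrel0
  -- the matrix B
  set B : Matrix (Fin s) (Fin k) R := Matrix.of (fun i j => b i j) with hB
  set Q : Type u := (Fin s → R) ⧸ LinearMap.range B.mulVecLin with hQ
  set mkq : (Fin s → R) →ₗ[R] Q := (LinearMap.range B.mulVecLin).mkQ with hmkq
  have hcol : ∀ j : Fin k, mkq (fun i => b i j) = 0 := by
    intro j
    have : (fun i => b i j) ∈ LinearMap.range B.mulVecLin := by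
      refine ⟨Pi.single j 1, ?_⟩
      funext i
      simp [Matrix.mulVecLin_apply, Matrix.mulVec_single_one, hB]
    rw [hmkq, Submodule.mkQ_apply, Submodule.Quotient.mk_eq_zero]
    exact this
  -- key tensor computation
  have hzero : LinearMap.rTensor Q f ((1:R) ⊗ₜ mkq r) = 0 := by
    rw [LinearMap.rTensor_tmul]
    have h5 : f 1 ⊗ₜ[R] mkq r = ∑ i, f 1 ⊗ₜ[R] mkq (Pi.single i (r i)) := by
      rw [← tmul_sum, ← map_sum, Finset.univ_sum_single]
    rw [h5]
    have h6 : ∀ i : Fin s, f 1 ⊗ₜ[R] mkq (Pi.single i (r i))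
        = ∑ j, n j ⊗ₜ[R] mkq (Pi.single i (b i j)) := by
      intro i
      have e1 : mkq (Pi.single i (r i)) = r i • mkq (Pi.single i (1:R)) := by
        rw [← map_smul]
        congr 1
        rw [← Pi.single_smul, smul_eq_mul, mul_one]
      calc f 1 ⊗ₜ[R] mkq (Pi.single i (r i))
          = f 1 ⊗ₜ[R] (r i • mkq (Pi.single i (1:R))) := by rw [e1]
        _ = (r i • f 1) ⊗ₜ[R] mkq (Pi.single i (1:R)) := by
              rw [tmul_smul, smul_tmul']
        _ = f (r i) ⊗ₜ[R] mkq (Pi.single i (1:R)) := by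
              rw [← map_smul, smul_eq_mul, mul_one]
        _ = (∑ j, b i j • n j) ⊗ₜ[R] mkq (Pi.single i (1:R)) := by rw [hr i]
        _ = ∑ j, (b i j • n j) ⊗ₜ[R] mkq (Pi.single i (1:R)) := sum_tmul _ _ _
        _ = ∑ j, n j ⊗ₜ[R] mkq (Pi.single i (b i j)) := by
              refine Finset.sum_congr rfl fun j _ => ?_
              rw [smul_tmul, ← map_smul]
              congr 2
              rw [← Pi.single_smul, smul_eq_mul, mul_one]
    rw [Finset.sum_congr rfl fun i _ => h6 i, Finset.sum_comm]
    have h7 : ∀ j : Fin k, (∑ i, n j ⊗ₜ[R] mkq (Pi.single i (b i j))) = 0 := by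
      intro j
      rw [← tmul_sum, ← map_sum, Finset.univ_sum_single, hcol]
      exact tmul_zero _ _
    rw [Finset.sum_congr rfl fun j _ => h7 j, Finset.sum_const, smul_zero]
  -- conclude r is in the range of B
  have hrzero : mkq r = 0 := by
    have h8 : (1:R) ⊗ₜ[R] mkq r = 0 := by
      apply hf Q
      rw [hzero, map_zero]
    have h9 := congrArg (TensorProduct.lid R Q) h8
    simpa using h9
  have hrmem : r ∈ LinearMap.range B.mulVecLin := by
    rwa [hmkq, ← LinearMap.mem_ker, Submodule.ker_mkQ] at hrzero
  obtain ⟨c, hc⟩ := hrmem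
  -- corrected lifts
  set n' : Fin k → N := fun j => n j - f (c j) with hn'
  have hmkn' : ∀ j, (LinearMap.range f).mkQ (n' j) = πC (Pi.single j 1) := by
    intro j
    have : (LinearMap.range f).mkQ (f (c j)) = 0 := by
      rw [← LinearMap.mem_ker, Submodule.ker_mkQ]; exact ⟨c j, rfl⟩
    rw [hn', map_sub, this, sub_zero, hn]
  have hreln' : ∀ i : Fin s, (∑ j, b i j • n' j) = 0 := by
    intro i
    have e3 : ∑ j, b i j • n' j = (∑ j, b i j • n j) - f (∑ j, b i j * c j) := by
      rw [map_sum, ← Finset.sum_sub_distrib]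
      refine Finset.sum_congr rfl fun j _ => ?_
      rw [hn', smul_sub]
      congr 1
      rw [← map_smul, smul_eq_mul]
    have e4 : (∑ j, b i j * c j) = r i := by
      have := congrFun hc i
      simpa [Matrix.mulVecLin_apply, Matrix.mulVec, dotProduct, hB] using this
    rw [e3, e4, hr i, sub_self]
  -- the splitting of the quotient
  set ψ : (Fin k → R) →ₗ[R] N := ∑ j, LinearMap.smulRight (LinearMap.proj j) (n' j) with hψ
  have hψapp : ∀ t : Fin k → R, ψ t = ∑ j, t j • n' j := by
    intro t
    rw [hψ]
    simp [LinearMap.sum_apply, LinearMap.smulRight_apply]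
  have hψK : LinearMap.ker πC ≤ LinearMap.ker ψ := by
    rw [← hb, Submodule.span_le]
    rintro x ⟨i, rfl⟩
    show ψ (b i) = 0
    rw [hψapp, hreln']
  set e := LinearMap.quotKerEquivOfSurjective πC hπC with he
  set σ : C →ₗ[R] N :=
    (Submodule.liftQ (LinearMap.ker πC) ψ hψK) ∘ₗ e.symm.toLinearMap with hσ
  have heq : ∀ t : Fin k → R, e (Submodule.Quotient.mk t) = πC t := fun t => rfl
  have hσapp : ∀ t : Fin k → R, σ (πC t) = ψ t := by
    intro t
    rw [hσ]
    have : e.symm (πC t) = Submodule.Quotient.mk t := by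
      rw [LinearEquiv.symm_apply_eq, heq]
    simp only [LinearMap.coe_comp, Function.comp_apply, LinearEquiv.coe_toLinearMap, this]
    exact Submodule.liftQ_apply _ _ _
  have hsec : ∀ x : C, (LinearMap.range f).mkQ (σ x) = x := by
    intro x
    obtain ⟨t, rfl⟩ := hπC x
    rw [hσapp, hψapp, map_sum]
    rw [hpi πC t]
    refine Finset.sum_congr rfl fun j _ => ?_
    rw [map_smul, hmkn']
  -- build φ
  set φ₀ : N →ₗ[R] N := LinearMap.id - σ ∘ₗ (LinearMap.range f).mkQ with hφ₀
  have hmem : ∀ x : N, φ₀ x ∈ LinearMap.range f := by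
    intro x
    rw [← Submodule.ker_mkQ (LinearMap.range f), LinearMap.mem_ker]
    rw [hφ₀]
    simp only [LinearMap.sub_apply, LinearMap.id_apply, LinearMap.coe_comp,
      Function.comp_apply, map_sub, hsec, sub_self]
  set φ : N →ₗ[R] R := (LinearEquiv.ofInjective f hinj).symm.toLinearMap ∘ₗ
    LinearMap.codRestrict (LinearMap.range f) φ₀ hmem with hφ
  refine ⟨φ, ?_⟩
  apply LinearMap.ext
  intro x
  show φ (f x) = x
  have h10 : φ₀ (f x) = f x := by
    rw [hφ₀]
    have : (LinearMap.range f).mkQ (f x) = 0 := by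
      rw [← LinearMap.mem_ker, Submodule.ker_mkQ]; exact ⟨x, rfl⟩
    simp only [LinearMap.sub_apply, LinearMap.id_apply, LinearMap.coe_comp,
      Function.comp_apply, this, map_zero, sub_zero]
  rw [hφ]
  simp only [LinearMap.coe_comp, Function.comp_apply, LinearEquiv.coe_toLinearMap]
  rw [LinearEquiv.symm_apply_eq]
  apply Subtype.ext
  rw [LinearEquiv.ofInjective_apply]
  simp only [LinearMap.codRestrict_apply]
  exact h10

/-- Existence of a Frobenius splitting for each `e`. -/
theorem exists_phi (R : Type u) [CommRing R] [IsNoetherianRing R]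
    (p : ℕ) [Fact p.Prime] [CharP R p]
    (hFP : IsFPure R p) (hFF : IsFFinite R p) (e : ℕ) :
    ∃ φ : FPush p e R →ₗ[R] R, φ (toFPush p e 1) = 1 := by
  -- first, the case e = 1
  have hfin : Module.Finite R (FPush p 1 R) := finite_fpush_one R p hFF
  obtain ⟨φ₁, hφ₁⟩ := split_of_pure (splittingMap R p 1 1)
    (fun Q _ _ => pure_splittingMap_one R p hFP Q)
  have hf1 : (splittingMap R p 1 1) 1 = toFPush p 1 1 := by
    show (1:R) * iterateFrobenius R p 1 1 = (1:R)
    rw [map_one, mul_one]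
  have hphi1 : φ₁ (toFPush p 1 1) = 1 := by
    have h2 := LinearMap.congr_fun hφ₁ 1
    rw [LinearMap.comp_apply, hf1] at h2
    simpa using h2
  clear hφ₁ hf1
  induction e with
  | zero =>
    refine ⟨{ toFun := fun x => x, map_add' := fun _ _ => rfl,
              map_smul' := fun r x => by
                show r ^ p ^ 0 * (id x : R) = r * (id x : R)
                rw [pow_zero, pow_one] }, rfl⟩
  | succ e ih =>
    obtain ⟨φe, hφe⟩ := ih
    have hF1add : ∀ a b : R, φ₁ (a + b) = φ₁ a + φ₁ b := fun a b => φ₁.map_add a b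
    have hF1smul : ∀ a x : R, φ₁ (a ^ p ^ 1 * x) = a * φ₁ x := fun a x => φ₁.map_smul a x
    have hFesmul : ∀ a x : R, φe (a ^ p ^ e * x) = a * φe x := fun a x => φe.map_smul a x
    refine ⟨{ toFun := fun x : FPush p (e+1) R => φe (φ₁ (id x : R)),
              map_add' := fun x y => ?_, map_smul' := fun r x => ?_ }, ?_⟩
    · show φe (φ₁ ((id x : R) + (id y : R))) = φe (φ₁ (id x : R)) + φe (φ₁ (id y : R))
      rw [hF1add]
      exact φe.map_add _ _
    · show φe (φ₁ (r ^ p ^ (e+1) * (id x : R))) = r * φe (φ₁ (id x : R))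
      rw [show r ^ p ^ (e+1) = (r ^ p ^ e) ^ p ^ 1 by
        rw [← pow_mul]
        congr 1
        rw [pow_one, pow_succ]]
      rw [hF1smul, hFesmul]
    · show φe (φ₁ (1 : R)) = 1
      have h3 : φ₁ (1 : R) = 1 := hphi1
      rw [h3]
      exact hφe

end Aux

/-- Lemma 3.3: in a local `(G_1)`, `(S_2)`, `F`-finite, `F`-pure ring
of prime characteristic `p > 0`, the divisorial ideal `R(D)` of a torsion divisor `D`
of index `p^e` (Cartier in codimension one) is a direct summand of `F^e_* R`. -/
theorem p_torsion_divisor_direct_summand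
    (R : Type u) [CommRing R] [IsNoetherianRing R] [IsLocalRing R]
    (p : ℕ) [Fact p.Prime] [CharP R p]
    (hG1 : IsG1 R) (hS2 : IsS2Ring R)
    (hFF : IsFFinite R p) (hFP : IsFPure R p)
    (e : ℕ)
    (M : Submodule R (FractionRing R))
    (hM : IsGenDivisorIdeal R (FractionRing R) M)
    (hPU : IsPrincipalUnitSub R (FractionRing R)
      (divPowZ R (FractionRing R) M ((p ^ e : ℕ) : ℤ)))
    (hidx : divisorIndex R (FractionRing R) M = p ^ e) :
    IsDirectSummandOf R (↥M) (FPush p e R) := by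
  classical
  set L := FractionRing R with hL
  set q := p ^ e with hqdef
  have hq0 : 0 < q := pow_pos (Nat.Prime.pos Fact.out) e
  have hq1' : q - 1 + 1 = q := Nat.succ_pred_eq_of_pos hq0
  have hinj : Function.Injective (algebraMap R L) :=
    IsLocalization.injective L (le_refl (nonZeroDivisors R))
  haveI hLchar : CharP L p := charP_of_injective_algebraMap hinj p
  obtain ⟨v, hvu, hvspan⟩ := hPU
  have hdiv : divPowZ R L M ((q : ℕ) : ℤ) = divHull R L (M ^ q) := rfl
  rw [hdiv] at hvspan
  -- Step A : `q`-th powers of elements of `M` land in the span of `v`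
  have hMhull : ∀ x : L, x ∈ M → x ^ q ∈ Submodule.span R {v} := by
    intro x hx
    rw [← hvspan]
    have h1 : x ^ q ∈ M ^ q := Submodule.pow_mem_pow M hx q
    show ∀ z ∈ divDual R L (M ^ q), x ^ q * z ∈ (1 : Submodule R L)
    intro z hz
    have hz' : ∀ m ∈ M ^ q, z * m ∈ (1 : Submodule R L) := hz
    rw [mul_comm]
    exact hz' _ h1
  choose ir hir using fun x : ↥M => Submodule.mem_span_singleton.mp (hMhull x x.2)
  have huniq : ∀ r r' : R, r • v = r' • v → r = r' := by
    intro r r' h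
    rw [Algebra.smul_def, Algebra.smul_def, mul_comm _ v, mul_comm _ v] at h
    exact hinj (hvu.mul_left_cancel h)
  have hfrobL : ∀ x y : L, (x + y) ^ q = x ^ q + y ^ q := fun x y =>
    add_pow_char_pow x y p e
  -- the inclusion map ι
  set ι : ↥M →ₗ[R] FPush p e R :=
    { toFun := fun x => toFPush p e (ir x)
      map_add' := fun x y => by
        show ir (x + y) = ir x + ir y
        apply huniq
        rw [hir (x + y), add_smul, hir x, hir y, Submodule.coe_add, hfrobL]
      map_smul' := fun t x => by
        show ir (t • x) = t ^ q * ir x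
        apply huniq
        have h2 : ((t • x : ↥M) : L) = algebraMap R L t * (x : L) := by
          rw [Submodule.coe_smul, Algebra.smul_def]
        rw [hir (t • x), mul_smul, hir x, Algebra.smul_def (t ^ q) (((x : L)) ^ q),
          h2, mul_pow, map_pow] } with hι
  -- the Frobenius splitting φ
  obtain ⟨φ, hφ1⟩ := exists_phi R p hFP hFF e
  set Φ : R → R := fun x => φ (toFPush p e x) with hΦdef
  have hφadd : ∀ a b : R, Φ (a + b) = Φ a + Φ b := fun a b => φ.map_add a b
  have hφsmul : ∀ a x : R, Φ (a ^ q * x) = a * Φ x := fun a x => φ.map_smul a x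
  have hφone : Φ (1 : R) = 1 := hφ1
  -- a presentation of v as a fraction
  obtain ⟨⟨a, s⟩, hvs⟩ := IsLocalization.mk'_surjective (nonZeroDivisors R) v
  have hva : v * algebraMap R L (s : R) = algebraMap R L a := by
    rw [← hvs]; exact IsLocalization.mk'_spec L a s
  have hus : IsUnit (algebraMap R L (s : R)) := IsLocalization.map_units L s
  have hone : algebraMap R L (s : R) * ((hus.unit⁻¹ : Lˣ) : L) = 1 := by
    have h := Units.mul_inv hus.unit
    rwa [IsUnit.unit_spec hus] at h
  set B : R := a * (s : R) ^ (q - 1) with hB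
  set pif : R → L := fun r =>
    algebraMap R L (Φ (r * B)) * ((hus.unit⁻¹ : Lˣ) : L) with hpif
  -- Step B : the duality computation
  have hdd : ∀ z : L, z ∈ divDual R L M → ∀ n : ℕ, ∀ m ∈ M ^ n,
      z ^ n * m ∈ (1 : Submodule R L) := by
    intro z hz n m hm
    have hz' : ∀ m ∈ M, z * m ∈ (1 : Submodule R L) := hz
    refine Submodule.pow_induction_on_left' (M := M)
      (C := fun n x _ => z ^ n * x ∈ (1 : Submodule R L)) ?_ ?_ ?_ hm
    · intro r
      rw [pow_zero, one_mul]
      exact Submodule.algebraMap_mem r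
    · intro x y i _ _ h1 h2
      rw [mul_add]
      exact Submodule.add_mem _ h1 h2
    · intro m' hm' i x _ ih
      have h3 : z ^ (i + 1) * (m' * x) = (z * m') * (z ^ i * x) := by ring
      rw [h3]
      have h4 := Submodule.mul_mem_mul (hz' m' hm') ih
      rwa [mul_one] at h4
  have hvz : ∀ z : L, z ∈ divDual R L M → ∃ d : R, algebraMap R L d = v * z ^ q := by
    intro z hz
    have hv1 : v ∈ divHull R L (M ^ q) := by
      rw [hvspan]
      exact Submodule.mem_span_singleton_self v
    have hv1' : ∀ m ∈ divDual R L (M ^ q), v * m ∈ (1 : Submodule R L) := hv1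
    have hzq : z ^ q ∈ divDual R L (M ^ q) := by
      show ∀ m ∈ M ^ q, z ^ q * m ∈ (1 : Submodule R L)
      intro m hm
      exact hdd z hz q m hm
    exact Submodule.mem_one.mp (hv1' (z ^ q) hzq)
  -- Step C : the key computation for `pif`
  have hkey : ∀ (r : R) (z : L), z ∈ divDual R L M → ∀ d : R,
      algebraMap R L d = v * z ^ q → pif r * z = algebraMap R L (Φ (r * d)) := by
    intro r z hz d hd
    obtain ⟨⟨bz, tz⟩, hbz⟩ := IsLocalization.mk'_surjective (nonZeroDivisors R) z
    have hzt : z * algebraMap R L (tz : R) = algebraMap R L bz := by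
      rw [← hbz]; exact IsLocalization.mk'_spec L bz tz
    have hut : IsUnit (algebraMap R L (tz : R)) := IsLocalization.map_units L tz
    have habz : a * bz ^ q = (s : R) * (d * (tz : R) ^ q) := by
      apply hinj
      have e1 : algebraMap R L (a * bz ^ q)
          = algebraMap R L a * z ^ q * algebraMap R L (tz : R) ^ q := by
        rw [map_mul, map_pow, ← hzt, mul_pow]
        ring
      have e2 : algebraMap R L ((s : R) * (d * (tz : R) ^ q))
          = algebraMap R L a * z ^ q * algebraMap R L (tz : R) ^ q := by
        rw [map_mul, map_mul, map_pow, hd, ← hva]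
        ring
      rw [e1, e2]
    have hRlevel : Φ (r * B) * bz = (s : R) * (tz : R) * Φ (r * d) := by
      have h4 : (s : R) ^ (q - 1) * (s : R) = (s : R) ^ q := by
        rw [← pow_succ, hq1']
      have e3 : bz ^ q * (r * B) = ((s : R) * (tz : R)) ^ q * (r * d) := by
        rw [hB]
        calc bz ^ q * (r * (a * (s : R) ^ (q - 1)))
            = (a * bz ^ q) * r * (s : R) ^ (q - 1) := by ring
          _ = ((s : R) * (d * (tz : R) ^ q)) * r * (s : R) ^ (q - 1) := by rw [habz]
          _ = (d * (tz : R) ^ q * r) * ((s : R) ^ (q - 1) * (s : R)) := by ring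
          _ = (d * (tz : R) ^ q * r) * (s : R) ^ q := by rw [h4]
          _ = ((s : R) * (tz : R)) ^ q * (r * d) := by rw [mul_pow]; ring
      calc Φ (r * B) * bz = bz * Φ (r * B) := mul_comm _ _
        _ = Φ (bz ^ q * (r * B)) := (hφsmul bz (r * B)).symm
        _ = Φ (((s : R) * (tz : R)) ^ q * (r * d)) := by rw [e3]
        _ = (s : R) * (tz : R) * Φ (r * d) := hφsmul _ _
    have hXz : algebraMap R L (Φ (r * B)) * z
        = algebraMap R L (Φ (r * d)) * algebraMap R L (s : R) := by
      apply hut.mul_right_cancel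
      calc algebraMap R L (Φ (r * B)) * z * algebraMap R L (tz : R)
          = algebraMap R L (Φ (r * B)) * (z * algebraMap R L (tz : R)) := by ring
        _ = algebraMap R L (Φ (r * B)) * algebraMap R L bz := by rw [hzt]
        _ = algebraMap R L (Φ (r * B) * bz) := by rw [map_mul]
        _ = algebraMap R L ((s : R) * (tz : R) * Φ (r * d)) := by rw [hRlevel]
        _ = algebraMap R L (Φ (r * d)) * algebraMap R L (s : R)
            * algebraMap R L (tz : R) := by rw [map_mul, map_mul]; ring
    show algebraMap R L (Φ (r * B)) * ((hus.unit⁻¹ : Lˣ) : L) * z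
        = algebraMap R L (Φ (r * d))
    calc algebraMap R L (Φ (r * B)) * ((hus.unit⁻¹ : Lˣ) : L) * z
        = algebraMap R L (Φ (r * B)) * z * ((hus.unit⁻¹ : Lˣ) : L) := by ring
      _ = algebraMap R L (Φ (r * d)) * algebraMap R L (s : R)
          * ((hus.unit⁻¹ : Lˣ) : L) := by rw [hXz]
      _ = algebraMap R L (Φ (r * d))
          * (algebraMap R L (s : R) * ((hus.unit⁻¹ : Lˣ) : L)) := by ring
      _ = algebraMap R L (Φ (r * d)) := by rw [hone, mul_one]
  -- Step D : `pif` lands in `M`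
  have hmemM : ∀ r : R, pif r ∈ M := by
    intro r
    rw [← hM.reflexive]
    show ∀ z ∈ divDual R L M, pif r * z ∈ (1 : Submodule R L)
    intro z hz
    obtain ⟨d, hd⟩ := hvz z hz
    rw [hkey r z hz d hd]
    exact Submodule.algebraMap_mem _
  -- Step E : `pif` is additive and semilinear
  have hpifadd : ∀ r r' : R, pif (r + r') = pif r + pif r' := by
    intro r r'
    show algebraMap R L (Φ ((r + r') * B)) * ((hus.unit⁻¹ : Lˣ) : L)
        = algebraMap R L (Φ (r * B)) * ((hus.unit⁻¹ : Lˣ) : L)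
          + algebraMap R L (Φ (r' * B)) * ((hus.unit⁻¹ : Lˣ) : L)
    rw [add_mul, hφadd, map_add, add_mul]
  have hpifsmul : ∀ t r : R, pif (t ^ q * r) = algebraMap R L t * pif r := by
    intro t r
    show algebraMap R L (Φ ((t ^ q * r) * B)) * ((hus.unit⁻¹ : Lˣ) : L)
        = algebraMap R L t
          * (algebraMap R L (Φ (r * B)) * ((hus.unit⁻¹ : Lˣ) : L))
    rw [mul_assoc (t ^ q) r B, hφsmul t (r * B), map_mul]
    ring
  -- the projection map π
  set π : FPush p e R →ₗ[R] ↥M :=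
    { toFun := fun r => ⟨pif r, hmemM r⟩
      map_add' := fun r r' => Subtype.ext (hpifadd r r')
      map_smul' := fun t r => Subtype.ext (by
        show pif (t ^ q * (id r : R)) = t • pif (id r : R)
        rw [Algebra.smul_def]
        exact hpifsmul t (id r)) } with hπ
  refine ⟨ι, π, ?_⟩
  apply LinearMap.ext
  intro x
  apply Subtype.ext
  show pif (ir x) = (x : L)
  obtain ⟨⟨bx, tx⟩, hbx⟩ := IsLocalization.mk'_surjective (nonZeroDivisors R) ((x : L))
  have hxt : (x : L) * algebraMap R L (tx : R) = algebraMap R L bx := by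
    rw [← hbx]; exact IsLocalization.mk'_spec L bx tx
  have hutx : IsUnit (algebraMap R L (tx : R)) := IsLocalization.map_units L tx
  have hxq : bx ^ q * (s : R) = (ir x) * (a * (tx : R) ^ q) := by
    apply hinj
    have e1 : algebraMap R L (bx ^ q * (s : R))
        = (x : L) ^ q * algebraMap R L (tx : R) ^ q * algebraMap R L (s : R) := by
      rw [map_mul, map_pow, ← hxt, mul_pow]
    have e2 : algebraMap R L ((ir x) * (a * (tx : R) ^ q))
        = (x : L) ^ q * algebraMap R L (tx : R) ^ q * algebraMap R L (s : R) := by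
      calc algebraMap R L ((ir x) * (a * (tx : R) ^ q))
          = algebraMap R L (ir x) * (algebraMap R L a * algebraMap R L (tx : R) ^ q) := by
            rw [map_mul, map_mul, map_pow]
        _ = (algebraMap R L (ir x) * v) * algebraMap R L (s : R)
            * algebraMap R L (tx : R) ^ q := by rw [← hva]; ring
        _ = (x : L) ^ q * algebraMap R L (s : R) * algebraMap R L (tx : R) ^ q := by
            rw [← Algebra.smul_def, hir x]
        _ = (x : L) ^ q * algebraMap R L (tx : R) ^ q * algebraMap R L (s : R) := by ring
    rw [e1, e2]
  have hfinal : (tx : R) * Φ ((ir x) * B) = bx * (s : R) := by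
    have e3 : (tx : R) ^ q * ((ir x) * B) = (bx * (s : R)) ^ q * 1 := by
      rw [hB, mul_pow, mul_one]
      calc (tx : R) ^ q * ((ir x) * (a * (s : R) ^ (q - 1)))
          = ((ir x) * (a * (tx : R) ^ q)) * (s : R) ^ (q - 1) := by ring
        _ = (bx ^ q * (s : R)) * (s : R) ^ (q - 1) := by rw [← hxq]
        _ = bx ^ q * ((s : R) ^ (q - 1) * (s : R)) := by ring
        _ = bx ^ q * (s : R) ^ q := by rw [← pow_succ, hq1']
    calc (tx : R) * Φ ((ir x) * B) = Φ ((tx : R) ^ q * ((ir x) * B)) :=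
          (hφsmul _ _).symm
      _ = Φ ((bx * (s : R)) ^ q * 1) := by rw [e3]
      _ = bx * (s : R) * Φ 1 := hφsmul _ _
      _ = bx * (s : R) := by rw [hφone, mul_one]
  have hUnit : IsUnit (algebraMap R L (s : R) * algebraMap R L (tx : R)) :=
    hus.mul hutx
  apply hUnit.mul_right_cancel
  show algebraMap R L (Φ ((ir x) * B)) * ((hus.unit⁻¹ : Lˣ) : L)
      * (algebraMap R L (s : R) * algebraMap R L (tx : R))
      = (x : L) * (algebraMap R L (s : R) * algebraMap R L (tx : R))
  calc algebraMap R L (Φ ((ir x) * B)) * ((hus.unit⁻¹ : Lˣ) : L)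
        * (algebraMap R L (s : R) * algebraMap R L (tx : R))
      = (algebraMap R L (Φ ((ir x) * B)) * algebraMap R L (tx : R))
          * (algebraMap R L (s : R) * ((hus.unit⁻¹ : Lˣ) : L)) := by ring
    _ = algebraMap R L (Φ ((ir x) * B)) * algebraMap R L (tx : R) := by
        rw [hone, mul_one]
    _ = algebraMap R L ((tx : R) * Φ ((ir x) * B)) := by rw [map_mul]; ring
    _ = algebraMap R L (bx * (s : R)) := by rw [hfinal]
    _ = (x : L) * (algebraMap R L (s : R) * algebraMap R L (tx : R)) := by
        rw [map_mul, ← hxt]; ring
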